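/- Let A, B be m-th order n-dimensional tensors with A x^m > 0 for all x ∈ K \ {0}, where K is a product of second-order cones, and let F(x) = λ(x) A x^{m-1} − B x^{m-1} with λ(x) = B x^m / A x^m. If x̄ solves the variational inequality: x̄ ∈ K_0 and F(x̄)^T(z − x̄) ≥ 0 for all z ∈ K_0 := {x ∈ K : e^T x = 1}, then (x̄, λ̄) with λ̄ = λ(x̄) solves the second-order cone tensor eigenvalue complementarity problem: x̄ ∈ K, w := λ̄ A x̄^{m-1} − B x̄^{m-1} ∈ K, and ⟨x̄, w⟩ = 0, with x̄ ≠ 0. -/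

import Mathlib

/-- Index type of `ℝ^{n₁} × ⋯ × ℝ^{n_r}` with blocks of sizes `n i + 1`;
`⟨i, 0⟩` is the head index of block `i`. -/
abbrev BIdx {r : ℕ} (n : Fin r → ℕ) := (i : Fin r) × Fin (n i + 1)

/-- Membership in the product of second-order cones `K = K^{n₁} × ⋯ × K^{n_r}`. -/
def inK {r : ℕ} (n : Fin r → ℕ) (x : BIdx n → ℝ) : Prop :=
  ∀ i, Real.sqrt (∑ j : Fin (n i), x ⟨i, j.succ⟩ ^ 2) ≤ x ⟨i, 0⟩

/-- `eᵀx = ∑ᵢ x^i₀`, the sum of the head components of `x`. -/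
def eT {r : ℕ} (n : Fin r → ℕ) (x : BIdx n → ℝ) : ℝ := ∑ i, x ⟨i, 0⟩


/-- `A x^{m} = ∑ a_{i₁…i_m} x_{i₁} ⋯ x_{i_m}`. -/
def tpow {m : ℕ} {ι : Type*} [Fintype ι] (A : (Fin m → ι) → ℝ) (x : ι → ℝ) : ℝ :=
  ∑ f : Fin m → ι, A f * ∏ j, x (f j)

/-- `(A x^{m})_k = ∑_{i₂,…,i_{m+1}} a_{k i₂…i_{m+1}} x_{i₂} ⋯ x_{i_{m+1}}`. -/
def tmap {m : ℕ} {ι : Type*} [Fintype ι] (A : (Fin (m + 1) → ι) → ℝ) (x : ι → ℝ)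
    (k : ι) : ℝ :=
  ∑ f : Fin m → ι, A (Fin.cons k f) * ∏ j, x (f j)

lemma contract {m : ℕ} {ι : Type*} [Fintype ι] (A : (Fin (m + 1) → ι) → ℝ)
    (x : ι → ℝ) : ∑ k, x k * tmap A x k = tpow A x := by
  have h : tpow A x
      = ∑ p : ι × (Fin m → ι), x p.1 * (A (Fin.cons p.1 p.2) * ∏ j, x (p.2 j)) := by
    refine (Fintype.sum_equiv (Fin.consEquiv fun _ => ι) _ _ fun p => ?_).symm
    simp [Fin.consEquiv, Fin.prod_univ_succ]
    ring
  rw [h, Fintype.sum_prod_type]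
  unfold tmap
  simp_rw [Finset.mul_sum]

/-- If `x̄` solves the variational inequality `VIP(F, K₀)` with
`F(x) = λ(x) A x^m - B x^m`, `λ(x) = B x^{m+1}/A x^{m+1}`, and `A` is strictly
`K`-positive, then `(x̄, λ(x̄))` solves the second-order cone tensor eigenvalue
complementarity problem. Here the tensors have order `m + 1`. -/
theorem vip_solution_solves_socteicp {r : ℕ} (n : Fin r → ℕ) {m : ℕ}
    (A B : (Fin (m + 1) → BIdx n) → ℝ)
    (hpos : ∀ x : BIdx n → ℝ, inK n x → x ≠ 0 → 0 < tpow A x)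
    (x : BIdx n → ℝ) (hxK : inK n x) (hxe : eT n x = 1)
    (hvi : ∀ z : BIdx n → ℝ, inK n z ∧ eT n z = 1 →
      0 ≤ ∑ k, ((tpow B x / tpow A x) * tmap A x k - tmap B x k) * (z k - x k)) :
    x ≠ 0 ∧ inK n x ∧
      inK n (fun k => (tpow B x / tpow A x) * tmap A x k - tmap B x k) ∧
      ∑ k, x k * ((tpow B x / tpow A x) * tmap A x k - tmap B x k) = 0 := by
  have hx0 : x ≠ 0 := by
    intro h
    rw [h] at hxe
    simp [eT] at hxe
  have hA : 0 < tpow A x := hpos x hxK hx0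
  set lam : ℝ := tpow B x / tpow A x with hlam
  set w : BIdx n → ℝ := fun k => lam * tmap A x k - tmap B x k with hw
  have horth : ∑ k, x k * w k = 0 := by
    have h1 : ∑ k, x k * w k
        = lam * (∑ k, x k * tmap A x k) - ∑ k, x k * tmap B x k := by
      rw [Finset.mul_sum, ← Finset.sum_sub_distrib]
      refine Finset.sum_congr rfl fun k _ => ?_
      simp only [hw]
      ring
    rw [h1, contract, contract, hlam, div_mul_cancel₀ _ hA.ne']
    ring
  have hKz : ∀ z : BIdx n → ℝ, inK n z → eT n z = 1 → 0 ≤ ∑ k, w k * z k := by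
    intro z h1 h2
    have h3 := hvi z ⟨h1, h2⟩
    have h4 : ∑ k, w k * (z k - x k) = ∑ k, w k * z k - ∑ k, x k * w k := by
      rw [← Finset.sum_sub_distrib]
      refine Finset.sum_congr rfl fun k _ => ?_
      ring
    rw [h4, horth, sub_zero] at h3
    exact h3
  have hwK : inK n w := by
    intro i
    set S : ℝ := ∑ j : Fin (n i), w ⟨i, j.succ⟩ ^ 2 with hS
    set t : ℝ := Real.sqrt S with ht
    have hS0 : 0 ≤ S := Finset.sum_nonneg fun j _ => sq_nonneg _
    have hSt : t ^ 2 = S := Real.sq_sqrt hS0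
    have ht0 : 0 ≤ t := Real.sqrt_nonneg _
    set z : BIdx n → ℝ :=
      fun k => if k.1 = i then (if (k.2 : ℕ) = 0 then 1 else -t⁻¹ * w k) else 0 with hz
    have hz0 : z ⟨i, 0⟩ = 1 := by simp [hz]
    have hzs : ∀ j : Fin (n i), z ⟨i, j.succ⟩ = -t⁻¹ * w ⟨i, j.succ⟩ := by
      intro j
      simp [hz, Fin.val_succ]
    have hzo : ∀ (i' : Fin r) (j : Fin (n i' + 1)), i' ≠ i → z ⟨i', j⟩ = 0 := by
      intro i' j h
      simp [hz, h]
    have hinv : t⁻¹ ^ 2 * S ≤ 1 := by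
      rcases eq_or_ne t 0 with h | h
      · have : S = 0 := by rw [← hSt, h]; ring
        rw [this]; norm_num
      · rw [← hSt]
        have : t⁻¹ ^ 2 * t ^ 2 = 1 := by field_simp
        rw [this]
    have hzK : inK n z := by
      intro i'
      by_cases h : i' = i
      · subst h
        have hsum : ∑ j : Fin (n i'), z ⟨i', j.succ⟩ ^ 2 = t⁻¹ ^ 2 * S := by
          rw [hS, Finset.mul_sum]
          refine Finset.sum_congr rfl fun j _ => ?_
          rw [hzs j]
          ring
        rw [hsum, hz0]
        calc Real.sqrt (t⁻¹ ^ 2 * S) ≤ Real.sqrt 1 := Real.sqrt_le_sqrt hinv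
        _ = 1 := Real.sqrt_one
      · have hsum : ∑ j : Fin (n i'), z ⟨i', j.succ⟩ ^ 2 = 0 := by
          refine Finset.sum_eq_zero fun j _ => ?_
          rw [hzo i' j.succ h]
          ring
        rw [hsum, hzo i' 0 h, Real.sqrt_zero]
    have hze : eT n z = 1 := by
      unfold eT
      have : ∀ i' : Fin r, z ⟨i', 0⟩ = if i' = i then 1 else 0 := by
        intro i'
        by_cases h : i' = i
        · subst h; rw [hz0]; simp
        · rw [hzo i' 0 h]; simp [h]
      simp_rw [this]
      simp
    have hsum : ∑ k, w k * z k = w ⟨i, 0⟩ - t⁻¹ * S := by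
      rw [← Finset.univ_sigma_univ, Finset.sum_sigma]
      rw [Finset.sum_eq_single i]
      · rw [Fin.sum_univ_succ, hz0, mul_one]
        have hin : ∑ j : Fin (n i), w ⟨i, j.succ⟩ * z ⟨i, j.succ⟩ = -(t⁻¹ * S) := by
          have he : ∀ j : Fin (n i),
              w ⟨i, j.succ⟩ * z ⟨i, j.succ⟩ = -(t⁻¹ * w ⟨i, j.succ⟩ ^ 2) := fun j => by
            rw [hzs j]; ring
          simp_rw [he]
          rw [hS, Finset.mul_sum, ← Finset.sum_neg_distrib]
        rw [hin]
        ring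
      · intro b _ hb
        refine Finset.sum_eq_zero fun j _ => ?_
        rw [hzo b j hb]
        ring
      · intro h
        exact absurd (Finset.mem_univ i) h
    have hkey := hKz z hzK hze
    rw [hsum] at hkey
    have htS : t⁻¹ * S = t := by
      rcases eq_or_ne t 0 with h | h
      · have : S = 0 := by rw [← hSt, h]; ring
        rw [this, h]; ring
      · rw [← hSt]; field_simp
    rw [htS] at hkey
    rw [← ht] at *
    linarith
  refine ⟨hx0, hxK, hwK, horth⟩
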